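/- Fix a prime p and let 𝒪 be the ring of integers of C, the completion of an algebraic closure of ℚ_p. Let Ẽ⁺ = { (x^{(i)})_{i≥0} : x^{(i)} ∈ 𝒪, (x^{(i+1)})^p = x^{(i)} }, a commutative ring of characteristic p with multiplication (xy)^{(i)} = x^{(i)}y^{(i)} and addition (x+y)^{(i)} = lim_{j→∞}(x^{(i+j)} + y^{(i+j)})^{p^j}. Fix a compatible system of primitive p^n-th roots of unity ε^{(n)} ∈ 𝒪 and let ε = (ε^{(i)})_{i≥0} ∈ Ẽ⁺. Then Ẽ⁺ is an integral domain, and the localization Ẽ := Ẽ⁺[(ε−1)^{-1}] is a field; equivalently, for every nonzero x ∈ Ẽ⁺ there exist y ∈ Ẽ⁺ and an integer k ≥ 0 such that x·y = (ε−1)^k. -/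
import Mathlib


open Filter Topology

/-- The (pre-)tilt `Ẽ⁺ = lim_{x ↦ x^p} 𝒪_C` of the ring of integers of `C`:
`p`-power-compatible sequences of elements of the closed unit ball of `C`.
Its multiplication is componentwise. -/
def TiltSeq (p : ℕ) (C : Type*) [NormedField C] : Type _ :=
  {f : ℕ → C // (∀ i, ‖f i‖ ≤ 1) ∧ ∀ i, f (i + 1) ^ p = f i}

/-- Key ultrametric estimate: for `‖t‖ ≤ 1`,
`‖t‖^p ≤ max ‖(1+t)^p - 1‖ (p⁻¹ * ‖t‖)`. -/
private lemma key_step {p : ℕ} [Fact p.Prime] {C : Type*} [NormedField C]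
    [IsUltrametricDist C] (hp : ‖(p : C)‖ ≤ (p : ℝ)⁻¹) (t : C) (ht : ‖t‖ ≤ 1) :
    ‖t‖ ^ p ≤ max ‖(1 + t) ^ p - 1‖ ((p : ℝ)⁻¹ * ‖t‖) := by
  have hp1 : 1 < p := (Fact.out : p.Prime).one_lt
  have hsum : (1 + t) ^ p = 1 + (∑ m ∈ Finset.Ico 1 p, t ^ m * (p.choose m : C)) + t ^ p := by
    rw [add_comm (1:C) t, add_pow]
    rw [Finset.sum_range_succ]
    rw [Finset.range_eq_Ico, Finset.sum_eq_sum_Ico_succ_bot (by omega : 0 < p)]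
    simp [Nat.choose_self, Nat.choose_zero_right, mul_comm]
  have htp : t ^ p = ((1 + t) ^ p - 1) - ∑ m ∈ Finset.Ico 1 p, t ^ m * (p.choose m : C) := by
    rw [hsum]; ring
  have hterm : ∀ m ∈ Finset.Ico 1 p, ‖t ^ m * (p.choose m : C)‖ ≤ (p : ℝ)⁻¹ * ‖t‖ := by
    intro m hm
    rw [Finset.mem_Ico] at hm
    rw [norm_mul, norm_pow]
    have h1 : ‖t‖ ^ m ≤ ‖t‖ := pow_le_of_le_one (norm_nonneg t) ht (by omega)
    have h2 : ‖(p.choose m : C)‖ ≤ (p : ℝ)⁻¹ := by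
      obtain ⟨c, hc⟩ := (Fact.out : p.Prime).dvd_choose_self (by omega) hm.2
      rw [hc]
      push_cast
      rw [norm_mul]
      calc ‖(p : C)‖ * ‖(c : C)‖ ≤ (p : ℝ)⁻¹ * 1 :=
            mul_le_mul hp (IsUltrametricDist.norm_natCast_le_one C c) (norm_nonneg _)
              (by positivity)
        _ = (p : ℝ)⁻¹ := mul_one _
    calc ‖t‖ ^ m * ‖(p.choose m : C)‖ ≤ ‖t‖ * (p : ℝ)⁻¹ :=
          mul_le_mul h1 h2 (norm_nonneg _) (norm_nonneg _)
      _ = (p : ℝ)⁻¹ * ‖t‖ := mul_comm _ _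
  have hsnorm : ‖∑ m ∈ Finset.Ico 1 p, t ^ m * (p.choose m : C)‖ ≤ (p : ℝ)⁻¹ * ‖t‖ :=
    IsUltrametricDist.norm_sum_le_of_forall_le_of_nonneg
      (by positivity) hterm
  calc ‖t‖ ^ p = ‖t ^ p‖ := (norm_pow t p).symm
    _ = ‖((1 + t) ^ p - 1) + (-(∑ m ∈ Finset.Ico 1 p, t ^ m * (p.choose m : C)))‖ := by
        rw [htp, sub_eq_add_neg]
    _ ≤ max ‖(1 + t) ^ p - 1‖ ‖-(∑ m ∈ Finset.Ico 1 p, t ^ m * (p.choose m : C))‖ :=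
        IsUltrametricDist.norm_add_le_max _ _
    _ ≤ max ‖(1 + t) ^ p - 1‖ ((p : ℝ)⁻¹ * ‖t‖) := by
        rw [norm_neg]; exact max_le_max le_rfl hsnorm

/-- `Ẽ⁺` is an integral domain (it has no zero divisors and `0 ≠ 1`), and
`Ẽ = Ẽ⁺[(ε-1)⁻¹]` is a field: every nonzero `x ∈ Ẽ⁺` divides a power of `ε - 1`,
i.e. there are `y ∈ Ẽ⁺` and `k ≥ 0` with `x·y = (ε-1)^k`.  Here `ε` is the element of
`Ẽ⁺` given by a compatible system of primitive `p^n`-th roots of unity, `d = ε - 1`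
is computed with the tilt addition `(ε-1)^{(i)} = lim_j (ε^{(i+j)} - 1)^{p^j}`, and
multiplication (hence also `(ε-1)^k`) is componentwise. -/
theorem tilt_domain_and_field_after_inverting_eps_sub_one
    (p : ℕ) [Fact p.Prime]
    (C : Type*) [NormedField C] [CompleteSpace C] [IsAlgClosed C] [IsUltrametricDist C]
    (hnorm : ∀ r : ℚ, ‖(r : C)‖ = ‖(r : ℚ_[p])‖)
    (ε : TiltSeq p C) (hε0 : ε.1 0 = 1) (hε1 : ε.1 1 ≠ 1)
    (d : TiltSeq p C)
    (hd : ∀ i, Tendsto (fun j => (ε.1 (i + j) - 1) ^ p ^ j) atTop (𝓝 (d.1 i))) :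
    ((⟨fun _ => 0, fun _ => by simp, fun _ => zero_pow (Fact.out : p.Prime).ne_zero⟩ : TiltSeq p C) ≠
      ⟨fun _ => 1, fun _ => norm_one.le, fun _ => one_pow p⟩) ∧
    (∀ x y : TiltSeq p C, (∀ i, x.1 i * y.1 i = 0) →
      (∀ i, x.1 i = 0) ∨ (∀ i, y.1 i = 0)) ∧
    (∀ x : TiltSeq p C, (∃ i, x.1 i ≠ 0) →
      ∃ (y : TiltSeq p C) (k : ℕ), ∀ i, x.1 i * y.1 i = d.1 i ^ k) := by
  have hp1 : 1 < p := (Fact.out : p.Prime).one_lt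
  have hp0 : (0:ℝ) < p := by positivity
  have hpinv1 : (p : ℝ)⁻¹ < 1 := by
    rw [inv_lt_one_iff₀]; right; exact_mod_cast hp1
  have hpinv0 : (0:ℝ) < (p : ℝ)⁻¹ := by positivity
  -- norm of p in C
  have hpC : ‖(p : C)‖ ≤ (p : ℝ)⁻¹ := by
    have := hnorm p
    push_cast at this
    rw [this, Padic.norm_p]
  -- shift lemma: x i = x (i+m) ^ p^m
  have hshift : ∀ (x : TiltSeq p C) (i m : ℕ), x.1 i = x.1 (i + m) ^ p ^ m := by
    intro x i m
    induction m with
    | zero => simp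
    | succ m ih =>
      rw [ih, ← x.2.2 (i + m), ← pow_mul, mul_comm p (p ^ m), ← pow_succ, ← add_assoc]
  -- nonvanishing propagates
  have hnz : ∀ (x : TiltSeq p C), (∃ i, x.1 i ≠ 0) → ∀ i, x.1 i ≠ 0 := by
    rintro x ⟨j, hj⟩ i h0
    rcases le_total i j with h | h
    · obtain ⟨m, rfl⟩ := Nat.exists_eq_add_of_le h
      rw [hshift x i m] at h0
      exact hj ((pow_eq_zero_iff (pow_ne_zero m (by omega : p ≠ 0))).mp h0)
    · obtain ⟨m, rfl⟩ := Nat.exists_eq_add_of_le h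
      rw [hshift x j m, h0, zero_pow (pow_ne_zero m (by omega : p ≠ 0))] at hj
      exact hj rfl
  refine ⟨?_, ?_, ?_⟩
  · intro h
    have := congrArg (fun z : TiltSeq p C => z.1 0) h
    simp at this
  · intro x y h
    by_cases hx : ∀ i, x.1 i = 0
    · exact Or.inl hx
    · right
      push_neg at hx
      have hx' := hnz x hx
      intro i
      rcases mul_eq_zero.mp (h i) with h0 | h0
      · exact absurd h0 (hx' i)
      · exact h0
  · intro x hx
    have hx' := hnz x hx
    -- norms of ε_n - 1 : ‖ε_n - 1‖ ^ (p^(n-1) * (p-1)) ≤ p⁻¹ for n ≥ 1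
    set a : ℕ → ℝ := fun n => ‖ε.1 n - 1‖ with ha
    have ha0 : ∀ n, 0 ≤ a n := fun n => norm_nonneg _
    have ha1 : ∀ n, a n ≤ 1 := by
      intro n
      show ‖ε.1 n - 1‖ ≤ 1
      have h := IsUltrametricDist.norm_add_le_max (ε.1 n) (-1 : C)
      rw [norm_neg, norm_one, ← sub_eq_add_neg] at h
      exact h.trans (max_le (ε.2.1 n) le_rfl)
    have hstep : ∀ n, a (n+1) ^ p ≤ max (a n) ((p:ℝ)⁻¹ * a (n+1)) := by
      intro n
      have := key_step hpC (ε.1 (n+1) - 1) (ha1 (n+1))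
      rw [add_sub_cancel] at this
      rw [ε.2.2 n] at this
      exact this
    have hbound : ∀ n, 1 ≤ n → a n ^ (p ^ (n - 1) * (p - 1)) ≤ (p : ℝ)⁻¹ := by
      intro n hn
      induction n with
      | zero => omega
      | succ n ih =>
        have case2 : a (n+1) ^ p ≤ (p:ℝ)⁻¹ * a (n+1) → a (n+1) ^ (p ^ n * (p-1)) ≤ (p:ℝ)⁻¹ := by
          intro h2
          rcases eq_or_lt_of_le (ha0 (n+1)) with h0 | h0
          · rw [← h0, zero_pow (Nat.mul_ne_zero (pow_ne_zero n (by omega)) (by omega))]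
            exact le_of_lt hpinv0
          · have hpm1 : a (n+1) ^ (p - 1) ≤ (p:ℝ)⁻¹ := by
              have : a (n+1) ^ (p-1) * a (n+1) ≤ (p:ℝ)⁻¹ * a (n+1) := by
                rw [← pow_succ]
                have : p - 1 + 1 = p := by omega
                rw [this]; exact h2
              exact le_of_mul_le_mul_right this h0
            calc a (n+1) ^ (p ^ n * (p-1)) = (a (n+1) ^ (p-1)) ^ p ^ n := by
                  rw [← pow_mul, mul_comm]
              _ ≤ ((p:ℝ)⁻¹) ^ p ^ n :=
                  pow_le_pow_left₀ (by positivity) hpm1 _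
              _ ≤ (p:ℝ)⁻¹ := pow_le_of_le_one (le_of_lt hpinv0) (le_of_lt hpinv1)
                  (by positivity)
        rcases Nat.eq_or_lt_of_le hn with h1 | h1
        · -- n + 1 = 1, i.e. n = 0
          have hn0 : n = 0 := by omega
          subst hn0
          have h := hstep 0
          rw [ha] at h
          simp only [hε0, sub_self, norm_zero] at h
          have h' : a 1 ^ p ≤ (p:ℝ)⁻¹ * a 1 := by
            have := h.trans_eq (max_eq_right (by positivity))
            exact this
          simpa using case2 h'
        · have hn' : 1 ≤ n := by omega
          have ihn := ih hn'
          rcases le_max_iff.mp (hstep n) with h1' | h1'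
          · -- a(n+1)^p ≤ a n
            calc a (n+1) ^ (p ^ n * (p-1)) = (a (n+1) ^ p) ^ (p ^ (n-1) * (p-1)) := by
                  rw [← pow_mul]
                  congr 1
                  have : p ^ n = p * p ^ (n - 1) := by
                    conv_lhs => rw [show n = 1 + (n-1) by omega]
                    rw [pow_add, pow_one]
                  rw [this]; ring
              _ ≤ (a n) ^ (p ^ (n-1) * (p-1)) := pow_le_pow_left₀ (by positivity) h1' _
              _ ≤ (p:ℝ)⁻¹ := ihn
          · simpa using case2 h1'
    -- hence ‖(ε_n - 1)^(p^n)‖ ≤ p⁻¹ for n ≥ 1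
    have hbound2 : ∀ n, 1 ≤ n → a n ^ p ^ n ≤ (p : ℝ)⁻¹ := by
      intro n hn
      have hsplit : p ^ n = p ^ (n-1) * (p-1) + p ^ (n-1) := by
        have h1 : p ^ (n-1) * (p-1) + p ^ (n-1) = p ^ (n-1) * ((p-1)+1) := by ring
        have h2 : (p-1)+1 = p := by omega
        rw [h1, h2, ← pow_succ]
        congr 1
        omega
      calc a n ^ p ^ n = a n ^ (p ^ (n-1) * (p-1)) * a n ^ p ^ (n-1) := by
            rw [← pow_add, ← hsplit]
        _ ≤ (p:ℝ)⁻¹ * 1 := mul_le_mul (hbound n hn) (pow_le_one₀ (ha0 n) (ha1 n))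
            (by positivity) (by positivity)
        _ = (p:ℝ)⁻¹ := mul_one _
    -- ‖d 0‖ ≤ p⁻¹ < 1
    have hd0 : ‖d.1 0‖ ≤ (p : ℝ)⁻¹ := by
      have htend : Tendsto (fun j => ‖(ε.1 (0 + j) - 1) ^ p ^ j‖) atTop (𝓝 ‖d.1 0‖) :=
        (hd 0).norm
      refine le_of_tendsto htend ?_
      filter_upwards [eventually_ge_atTop 1] with j hj
      rw [norm_pow, zero_add]
      exact hbound2 j hj
    -- choose k with ‖d 0‖ ^ k ≤ ‖x 0‖
    have hx0 : 0 < ‖x.1 0‖ := norm_pos_iff.mpr (hx' 0)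
    obtain ⟨k, hk⟩ : ∃ k, ‖d.1 0‖ ^ k ≤ ‖x.1 0‖ := by
      obtain ⟨k, hk⟩ := exists_pow_lt_of_lt_one hx0 (lt_of_le_of_lt hd0 hpinv1)
      exact ⟨k, hk.le⟩
    -- define y
    refine ⟨⟨fun i => d.1 i ^ k / x.1 i, ⟨?_, ?_⟩⟩, k, ?_⟩
    · intro i
      rw [norm_div, norm_pow, div_le_one (norm_pos_iff.mpr (hx' i))]
      -- ‖d i‖^k ≤ ‖x i‖ : take p^i-th powers
      have hdpow : ‖d.1 i‖ ^ (k * p ^ i) ≤ ‖x.1 i‖ ^ p ^ i := by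
        have h1 : d.1 0 = d.1 i ^ p ^ i := by simpa using hshift d 0 i
        have h2 : x.1 0 = x.1 i ^ p ^ i := by simpa using hshift x 0 i
        calc ‖d.1 i‖ ^ (k * p ^ i) = (‖d.1 i‖ ^ p ^ i) ^ k := by rw [← pow_mul, mul_comm]
          _ = ‖d.1 0‖ ^ k := by rw [h1, norm_pow]
          _ ≤ ‖x.1 0‖ := hk
          _ = ‖x.1 i‖ ^ p ^ i := by rw [h2, norm_pow]
      have : (‖d.1 i‖ ^ k) ^ p ^ i ≤ ‖x.1 i‖ ^ p ^ i := by
        rw [← pow_mul]; exact hdpow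
      exact le_of_pow_le_pow_left₀ (by positivity) (norm_nonneg _) this
    · intro i
      rw [div_pow, ← pow_mul, mul_comm k p, pow_mul, d.2.2 i, x.2.2 i]
    · intro i
      rw [mul_div_cancel₀ _ (hx' i)]
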